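/- For every j ∈ ℕ, the polygonal path η̂_j = [w₋(j), v(j,0)] ∪ ⋃_{k ∈ ℕ} [v(j,k), v(j,k+1)] lies entirely on the front boundary of K: every point q of η̂_j satisfies q ∈ K, and q + (0, s, 0) ∉ K for every real s > 0. -/

import Mathlib

open Pointwise

/-- `w₋(j) = (0, −∑_{t=1}^{j} 1/t², ∑_{t=1}^{j} 1/t³)`. -/
noncomputable def wM (j : ℕ) : Fin 3 → ℝ :=
  ![0, -(∑ t ∈ Finset.Icc 1 j, (1 : ℝ) / (t : ℝ) ^ 2),
    ∑ t ∈ Finset.Icc 1 j, (1 : ℝ) / (t : ℝ) ^ 3]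

/-- `w₊(k) = (∑_{t=1}^{k} 1/t², ∑_{t=1}^{k} 1/t³, 0)`. -/
noncomputable def wP (k : ℕ) : Fin 3 → ℝ :=
  ![∑ t ∈ Finset.Icc 1 k, (1 : ℝ) / (t : ℝ) ^ 2,
    ∑ t ∈ Finset.Icc 1 k, (1 : ℝ) / (t : ℝ) ^ 3, 0]

/-- `ζ₂ = ∑_{t=1}^{∞} 1/t²`. -/
noncomputable def zeta2 : ℝ := ∑' t : ℕ, (1 : ℝ) / ((t : ℝ) + 1) ^ 2

/-- `ζ₃ = ∑_{t=1}^{∞} 1/t³`. -/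
noncomputable def zeta3 : ℝ := ∑' t : ℕ, (1 : ℝ) / ((t : ℝ) + 1) ^ 3

/-- `u₁ = (ζ₂, −2, ζ₃)`. -/
noncomputable def uOne : Fin 3 → ℝ := ![zeta2, -2, zeta3]

/-- `u₀ = (ζ₂, −2, 0)`. -/
noncomputable def uZero : Fin 3 → ℝ := ![zeta2, -2, 0]

/-- `v(j,k) = (1/(j+1)³)·w(j,k) + (((j+1)³ − 1)/(j+1)³)·w(j,k+1)` where
`w(j,k) = w₋(j) + w₊(k)`. -/
noncomputable def vU (j k : ℕ) : Fin 3 → ℝ :=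
  ((1 : ℝ) / ((j : ℝ) + 1) ^ 3) • (wM j + wP k) +
    ((((j : ℝ) + 1) ^ 3 - 1) / ((j : ℝ) + 1) ^ 3) • (wM j + wP (k + 1))

/-- The universal convex body `K`: the closure of the convex hull of the points
`w₋(j)`, `v(j,k)`, `u₀ − w₊(k)` and `u₁ − w₊(k)`. -/
noncomputable def KU : Set (Fin 3 → ℝ) :=
  closure (convexHull ℝ
    (Set.range wM ∪ (⋃ j : ℕ, Set.range (vU j)) ∪
     Set.range (fun k => uZero - wP k) ∪ Set.range (fun k => uOne - wP k)))

namespace FB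

noncomputable def S2 (n : ℕ) : ℝ := ∑ t ∈ Finset.Icc 1 n, (1 : ℝ) / (t : ℝ) ^ 2
noncomputable def S3 (n : ℕ) : ℝ := ∑ t ∈ Finset.Icc 1 n, (1 : ℝ) / (t : ℝ) ^ 3
noncomputable def pp (j : ℕ) : ℝ := 1 / ((j : ℝ) + 1) ^ 3
noncomputable def DD (μ : ℝ) (m : ℕ) : ℝ := 1 / (m : ℝ) ^ 3 - μ * (1 / (m : ℝ) ^ 2)
noncomputable def fl (μ γ : ℝ) (x : Fin 3 → ℝ) : ℝ := -μ * x 0 + x 1 + γ * x 2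
noncomputable def Aq (γ : ℝ) (n : ℕ) : ℝ := γ * S3 n - S2 n
noncomputable def Bq (μ : ℝ) (n : ℕ) : ℝ := S3 n - μ * S2 n

lemma pp_pos (j : ℕ) : 0 < pp j := by
  unfold pp; positivity

lemma pp_le_one (j : ℕ) : pp j ≤ 1 := by
  unfold pp
  rw [div_le_one (by positivity)]
  have h0 : (0:ℝ) ≤ (j:ℝ) := Nat.cast_nonneg j
  nlinarith [sq_nonneg ((j:ℝ)+1)]

lemma pp_antitone {i j : ℕ} (h : i ≤ j) : pp j ≤ pp i := by
  unfold pp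
  apply one_div_le_one_div_of_le (by positivity)
  have : (i:ℝ) ≤ (j:ℝ) := Nat.cast_le.mpr h
  have h0 : (0:ℝ) ≤ (i:ℝ) := Nat.cast_nonneg i
  exact pow_le_pow_left₀ (by linarith) (by linarith) 3

lemma S2_succ (n : ℕ) : S2 (n+1) = S2 n + 1 / ((n:ℝ)+1)^2 := by
  unfold S2
  rw [Finset.sum_Icc_succ_top (by omega)]
  push_cast; ring

lemma S3_succ (n : ℕ) : S3 (n+1) = S3 n + 1 / ((n:ℝ)+1)^3 := by
  unfold S3
  rw [Finset.sum_Icc_succ_top (by omega)]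
  push_cast; ring

lemma Bq_eq_sum (μ : ℝ) (n : ℕ) : Bq μ n = ∑ m ∈ Finset.Icc 1 n, DD μ m := by
  unfold Bq S2 S3 DD
  rw [Finset.mul_sum, ← Finset.sum_sub_distrib]

lemma Aq_eq_sum (γ : ℝ) (n : ℕ) :
    Aq γ n = ∑ m ∈ Finset.Icc 1 n, (γ - (m:ℝ)) / (m:ℝ)^3 := by
  unfold Aq S2 S3
  rw [Finset.mul_sum, ← Finset.sum_sub_distrib]
  apply Finset.sum_congr rfl
  intro m hm
  have hm1 : 1 ≤ m := (Finset.mem_Icc.mp hm).1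
  have : (m:ℝ) ≠ 0 := by positivity
  field_simp

end FB

namespace FB2
open FB

lemma wM0 (j : ℕ) : wM j 0 = 0 := rfl
lemma wM1 (j : ℕ) : wM j 1 = -(S2 j) := rfl
lemma wM2 (j : ℕ) : wM j 2 = S3 j := rfl
lemma wP0 (k : ℕ) : wP k 0 = S2 k := rfl
lemma wP1 (k : ℕ) : wP k 1 = S3 k := rfl
lemma wP2 (k : ℕ) : wP k 2 = 0 := rfl

lemma vU_apply (j k : ℕ) (i : Fin 3) : vU j k i =
    (1/((j:ℝ)+1)^3) * (wM j i + wP k i) +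
    ((((j:ℝ)+1)^3 - 1)/((j:ℝ)+1)^3) * (wM j i + wP (k+1) i) := rfl

lemma fl_wM (μ γ : ℝ) (n : ℕ) : fl μ γ (wM n) = Aq γ n := by
  rw [fl, wM0, wM1, wM2, Aq]; ring

lemma fl_vU (μ γ : ℝ) (j k : ℕ) :
    fl μ γ (vU j k) = Aq γ j + Bq μ (k+1) - pp j * DD μ (k+1) := by
  have hP : ((j:ℝ)+1)^3 ≠ 0 := by positivity
  have hk : ((k:ℝ)+1) ≠ 0 := by positivity
  rw [fl, vU_apply, vU_apply, vU_apply, wM0, wM1, wM2, wP0, wP0, wP1, wP1, wP2, wP2,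
    S2_succ k, S3_succ k, Aq, Bq, DD, pp, S2_succ k, S3_succ k]
  push_cast
  field_simp
  ring

lemma fl_uZ (μ γ : ℝ) (k : ℕ) :
    fl μ γ (uZero - wP k) = -(μ * (zeta2 - S2 k)) - 2 - S3 k := by
  have h0 : (uZero - wP k) 0 = zeta2 - S2 k := rfl
  have h1 : (uZero - wP k) 1 = -2 - S3 k := rfl
  have h2 : (uZero - wP k) 2 = 0 - 0 := rfl
  rw [fl, h0, h1, h2]; ring

lemma fl_uO (μ γ : ℝ) (k : ℕ) :
    fl μ γ (uOne - wP k) = -(μ * (zeta2 - S2 k)) - 2 - S3 k + γ * zeta3 := by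
  have h0 : (uOne - wP k) 0 = zeta2 - S2 k := rfl
  have h1 : (uOne - wP k) 1 = -2 - S3 k := rfl
  have h2 : (uOne - wP k) 2 = zeta3 - 0 := rfl
  rw [fl, h0, h1, h2]; ring

end FB2

namespace FB3
open FB FB2 Finset

lemma Icc_one_eq_Ioc (n : ℕ) : Finset.Icc 1 n = Finset.Ioc 0 n := by
  rw [← Finset.Icc_add_one_left_eq_Ioc, zero_add]

lemma Bq_sub (μ : ℝ) {a b : ℕ} (h : a ≤ b) :
    Bq μ b - Bq μ a = ∑ m ∈ Finset.Ioc a b, DD μ m := by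
  have key := Finset.sum_Ioc_consecutive (DD μ) (Nat.zero_le a) h
  rw [Bq_eq_sum, Bq_eq_sum, Icc_one_eq_Ioc, Icc_one_eq_Ioc]
  linarith

lemma DD_nonneg {μ : ℝ} {m : ℕ} (h : μ ≤ 1/(m:ℝ)) : 0 ≤ DD μ m := by
  rcases Nat.eq_zero_or_pos m with rfl | hm
  · simp [DD]
  have hm' : (0:ℝ) < (m:ℝ) := by exact_mod_cast hm
  have : DD μ m = (1/(m:ℝ)^2) * (1/(m:ℝ) - μ) := by rw [DD]; field_simp
  rw [this]
  have : 0 ≤ 1/(m:ℝ) - μ := by linarith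
  positivity

lemma DD_nonpos {μ : ℝ} {m : ℕ} (hm : 1 ≤ m) (h : 1/(m:ℝ) ≤ μ) : DD μ m ≤ 0 := by
  have hm' : (0:ℝ) < (m:ℝ) := by exact_mod_cast hm
  have hD : DD μ m = (1/(m:ℝ)^2) * (1/(m:ℝ) - μ) := by rw [DD]; field_simp
  rw [hD]
  apply mul_nonpos_of_nonneg_of_nonpos (by positivity)
  linarith

lemma one_div_le_one_div_nat {a b : ℕ} (ha : 1 ≤ a) (h : a ≤ b) :
    1/(b:ℝ) ≤ 1/(a:ℝ) := by
  have ha' : (0:ℝ) < (a:ℝ) := by exact_mod_cast ha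
  have : (a:ℝ) ≤ (b:ℝ) := by exact_mod_cast h
  apply one_div_le_one_div_of_le ha' this

/-- signs of `DD` below the break point. -/
lemma DD_sign1 {μ : ℝ} {k : ℕ} (hμ : μ ≤ 1/((k:ℝ)+1)) {m : ℕ} (hm2 : m ≤ k+1) :
    0 ≤ DD μ m := by
  rcases Nat.eq_zero_or_pos m with rfl | hm
  · simp [DD]
  apply DD_nonneg
  calc μ ≤ 1/((k:ℝ)+1) := hμ
    _ = 1/((k+1 : ℕ):ℝ) := by push_cast; ring
    _ ≤ 1/(m:ℝ) := one_div_le_one_div_nat hm hm2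

/-- signs of `DD` above the break point. -/
lemma DD_sign2 {μ : ℝ} {k : ℕ} (hμ : 1/((k:ℝ)+2) ≤ μ) {m : ℕ} (hm2 : k+2 ≤ m) :
    DD μ m ≤ 0 := by
  apply DD_nonpos (by omega)
  calc 1/(m:ℝ) ≤ 1/((k+2 : ℕ):ℝ) := one_div_le_one_div_nat (by omega) hm2
    _ = 1/((k:ℝ)+2) := by push_cast; ring
    _ ≤ μ := hμ

/-- P1: for any `j'`, the k-part of the value of `vU j' k'` is at most `Bq μ (k+1)`. -/
lemma P1 {μ : ℝ} {k : ℕ} (hμ1 : μ ≤ 1/((k:ℝ)+1)) (hμ2 : 1/((k:ℝ)+2) ≤ μ)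
    {p' : ℝ} (hp'0 : 0 ≤ p') (hp'1 : p' ≤ 1) (k' : ℕ) :
    Bq μ (k'+1) - p' * DD μ (k'+1) ≤ Bq μ (k+1) := by
  rcases le_or_gt k' k with h | h
  · have h1 : 0 ≤ DD μ (k'+1) := DD_sign1 hμ1 (by omega)
    have h2 : Bq μ (k'+1) ≤ Bq μ (k+1) := by
      have := Bq_sub μ (show k'+1 ≤ k+1 by omega)
      have hterm : 0 ≤ ∑ m ∈ Finset.Ioc (k'+1) (k+1), DD μ m :=
        Finset.sum_nonneg fun m hm => DD_sign1 hμ1 (Finset.mem_Ioc.mp hm).2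
      linarith
    nlinarith
  · have h1 : DD μ (k'+1) ≤ 0 := DD_sign2 hμ2 (by omega)
    have h2 : Bq μ (k'+1) - DD μ (k'+1) ≤ Bq μ (k+1) := by
      have e : Bq μ (k'+1) - Bq μ k' = DD μ (k'+1) := by
        rw [Bq_sub μ (Nat.le_succ k')]
        simp
      have h3 : Bq μ k' ≤ Bq μ (k+1) := by
        have := Bq_sub μ (show k+1 ≤ k' by omega)
        have hterm : ∑ m ∈ Finset.Ioc (k+1) k', DD μ m ≤ 0 :=
          Finset.sum_nonpos fun m hm => DD_sign2 hμ2 (by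
            have := (Finset.mem_Ioc.mp hm).1; omega)
        linarith
      linarith
    nlinarith

/-- P2: for row `j` itself, exact optimality of `k` given the balance relation. -/
lemma P2 {μ : ℝ} {k : ℕ} (hμ1 : μ ≤ 1/((k:ℝ)+1)) (hμ2 : 1/((k:ℝ)+2) ≤ μ)
    {p : ℝ} (hp0 : 0 ≤ p) (hp1 : p ≤ 1)
    (hrel : (1 - p) * DD μ (k+2) + p * DD μ (k+1) = 0) (k' : ℕ) :
    Bq μ (k'+1) - p * DD μ (k'+1) ≤ Bq μ (k+1) - p * DD μ (k+1) := by
  rcases le_or_gt k' k with h | h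
  · -- k' ≤ k
    rcases eq_or_lt_of_le h with rfl | h
    · exact le_rfl
    -- k' < k : RHS - LHS = (∑_{Ioc (k'+1) (k+1)} D) + p D(k'+1) - p D(k+1) ≥ (1-p)D(k+1) + pD(k'+1) ≥ 0
    have hsum := Bq_sub μ (show k'+1 ≤ k+1 by omega)
    have hmem : k+1 ∈ Finset.Ioc (k'+1) (k+1) := Finset.mem_Ioc.mpr ⟨by omega, le_refl _⟩
    have hsingle : DD μ (k+1) ≤ ∑ m ∈ Finset.Ioc (k'+1) (k+1), DD μ m :=
      Finset.single_le_sum (fun m hm => DD_sign1 hμ1 (Finset.mem_Ioc.mp hm).2) hmem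
    have h1 : 0 ≤ DD μ (k'+1) := DD_sign1 hμ1 (by omega)
    have h2 : 0 ≤ DD μ (k+1) := DD_sign1 hμ1 (by omega)
    nlinarith
  · -- k' ≥ k+1 : LHS - RHS = ∑_{Ioc (k+1) k'} D + (1-p)D(k'+1) - (1-p)D(k+2) ≤ 0
    have hsum := Bq_sub μ (show k+1 ≤ k' by omega)
    have hsplit : Bq μ (k'+1) - Bq μ k' = DD μ (k'+1) := by
      rw [Bq_sub μ (Nat.le_succ k')]; simp
    rcases eq_or_lt_of_le (show k+1 ≤ k' from h) with rfl | h2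
    · -- k' = k+1
      have : ∑ m ∈ Finset.Ioc (k+1) (k+1), DD μ m = 0 := by simp
      nlinarith [DD_sign2 hμ2 (show k+2 ≤ k+2 by omega)]
    · -- k' ≥ k+2
      have hmem : k+2 ∈ Finset.Ioc (k+1) k' := Finset.mem_Ioc.mpr ⟨by omega, by omega⟩
      have hrest : ∑ m ∈ Finset.Ioc (k+1) k', DD μ m ≤ DD μ (k+2) := by
        have hcons := Finset.sum_Ioc_consecutive (DD μ) (show k+1 ≤ k+2 by omega)
          (show k+2 ≤ k' by omega)
        have hone : ∑ m ∈ Finset.Ioc (k+1) (k+2), DD μ m = DD μ (k+2) := by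
          rw [Nat.Ioc_succ_singleton, Finset.sum_singleton]
        have hneg : ∑ m ∈ Finset.Ioc (k+2) k', DD μ m ≤ 0 :=
          Finset.sum_nonpos fun m hm => DD_sign2 hμ2 (by
            have := (Finset.mem_Ioc.mp hm).1; omega)
        linarith
      have hD1 : DD μ (k'+1) ≤ 0 := DD_sign2 hμ2 (by omega)
      have hD2 : DD μ (k+2) ≤ 0 := DD_sign2 hμ2 (by omega)
      nlinarith

end FB3

namespace FB4
open FB FB2 FB3 Finset

lemma Aq_sub (γ : ℝ) {a b : ℕ} (h : a ≤ b) :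
    Aq γ b - Aq γ a = ∑ m ∈ Finset.Ioc a b, (γ - (m:ℝ)) / (m:ℝ)^3 := by
  have key := Finset.sum_Ioc_consecutive (fun m : ℕ => (γ - (m:ℝ)) / (m:ℝ)^3)
    (Nat.zero_le a) h
  rw [Aq_eq_sum, Aq_eq_sum, Icc_one_eq_Ioc, Icc_one_eq_Ioc]
  linarith

/-- γ = j + 1/2 makes `Aq γ` maximal at `j`, with a gap `pp j / 2` elsewhere. -/
lemma A_max (j j' : ℕ) : Aq ((j:ℝ) + 1/2) j' ≤ Aq ((j:ℝ) + 1/2) j := by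
  set γ : ℝ := (j:ℝ) + 1/2 with hγ
  rcases lt_trichotomy j' j with h | rfl | h
  · have := Aq_sub γ (le_of_lt h)
    have hterm : 0 ≤ ∑ m ∈ Finset.Ioc j' j, (γ - (m:ℝ)) / (m:ℝ)^3 := by
      apply Finset.sum_nonneg
      intro m hm
      obtain ⟨h1, h2⟩ := Finset.mem_Ioc.mp hm
      have : (m:ℝ) ≤ (j:ℝ) := by exact_mod_cast h2
      have : 0 ≤ γ - (m:ℝ) := by rw [hγ]; linarith
      positivity
    linarith
  · exact le_rfl
  · have := Aq_sub γ (le_of_lt h)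
    have hterm : ∑ m ∈ Finset.Ioc j j', (γ - (m:ℝ)) / (m:ℝ)^3 ≤ 0 := by
      apply Finset.sum_nonpos
      intro m hm
      obtain ⟨h1, h2⟩ := Finset.mem_Ioc.mp hm
      have hm1 : (j:ℝ) + 1 ≤ (m:ℝ) := by exact_mod_cast h1
      have hm0 : (0:ℝ) < (m:ℝ) := by
        have : 0 < m := by omega
        exact_mod_cast this
      apply div_nonpos_of_nonpos_of_nonneg
      · rw [hγ]; linarith
      · positivity
    linarith

lemma A_gap {j j' : ℕ} (h : j' ≠ j) :
    Aq ((j:ℝ) + 1/2) j' + pp j / 2 ≤ Aq ((j:ℝ) + 1/2) j := by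
  set γ : ℝ := (j:ℝ) + 1/2 with hγ
  rcases lt_or_gt_of_ne h with h | h
  · -- j' < j : gap from the term m = j'+1
    have hsub := Aq_sub γ (le_of_lt h)
    have hmem : j'+1 ∈ Finset.Ioc j' j := Finset.mem_Ioc.mpr ⟨by omega, by omega⟩
    have hsingle : (γ - ((j'+1 : ℕ):ℝ)) / ((j'+1 : ℕ):ℝ)^3
        ≤ ∑ m ∈ Finset.Ioc j' j, (γ - (m:ℝ)) / (m:ℝ)^3 := by
      apply Finset.single_le_sum (f := fun m : ℕ => (γ - (m:ℝ)) / (m:ℝ)^3) ?_ hmem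
      intro m hm
      obtain ⟨h1, h2⟩ := Finset.mem_Ioc.mp hm
      have : (m:ℝ) ≤ (j:ℝ) := by exact_mod_cast h2
      have : 0 ≤ γ - (m:ℝ) := by rw [hγ]; linarith
      positivity
    have hbig : pp j / 2 ≤ (γ - ((j'+1 : ℕ):ℝ)) / ((j'+1 : ℕ):ℝ)^3 := by
      have h1 : ((j'+1 : ℕ):ℝ) ≤ (j:ℝ) := by exact_mod_cast h
      have h2 : (1:ℝ)/2 ≤ γ - ((j'+1 : ℕ):ℝ) := by rw [hγ]; linarith
      have h3 : pp j ≤ 1/((j'+1 : ℕ):ℝ)^3 := by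
        calc pp j ≤ pp j' := pp_antitone (show j' ≤ j by omega)
          _ = 1/((j'+1 : ℕ):ℝ)^3 := by rw [pp]; push_cast; ring_nf
      have h4 : (0:ℝ) < ((j'+1 : ℕ):ℝ)^3 := by positivity
      calc pp j / 2 ≤ (1/((j'+1 : ℕ):ℝ)^3) / 2 := by linarith
        _ = (1/2) / ((j'+1 : ℕ):ℝ)^3 := by ring
        _ ≤ (γ - ((j'+1 : ℕ):ℝ)) / ((j'+1 : ℕ):ℝ)^3 := by gcongr
    linarith
  · -- j' > j : loss from the term m = j+1
    have hsub := Aq_sub γ (le_of_lt h)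
    have hcons := Finset.sum_Ioc_consecutive (fun m : ℕ => (γ - (m:ℝ)) / (m:ℝ)^3)
      (show j ≤ j+1 by omega) (show j+1 ≤ j' by omega)
    have hone : ∑ m ∈ Finset.Ioc j (j+1), (γ - (m:ℝ)) / (m:ℝ)^3
        = (γ - ((j+1 : ℕ):ℝ)) / ((j+1 : ℕ):ℝ)^3 := by
      rw [Nat.Ioc_succ_singleton, Finset.sum_singleton]
    have hterm : (γ - ((j+1 : ℕ):ℝ)) / ((j+1 : ℕ):ℝ)^3 = -(pp j / 2) := by
      rw [hγ, pp]; push_cast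
      have : ((j:ℝ)+1)^3 ≠ 0 := by positivity
      field_simp
      ring
    have hrest : ∑ m ∈ Finset.Ioc (j+1) j', (γ - (m:ℝ)) / (m:ℝ)^3 ≤ 0 := by
      apply Finset.sum_nonpos
      intro m hm
      obtain ⟨h1, h2⟩ := Finset.mem_Ioc.mp hm
      have hm1 : (j:ℝ) + 2 ≤ (m:ℝ) := by exact_mod_cast h1
      have hj0 : (0:ℝ) ≤ (j:ℝ) := Nat.cast_nonneg j
      have hm0 : (0:ℝ) < (m:ℝ) := by linarith
      apply div_nonpos_of_nonpos_of_nonneg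
      · rw [hγ]; linarith
      · positivity
    linarith

lemma A_nonneg (j : ℕ) : 0 ≤ Aq ((j:ℝ) + 1/2) j := by
  rw [Aq_eq_sum]
  apply Finset.sum_nonneg
  intro m hm
  obtain ⟨h1, h2⟩ := Finset.mem_Icc.mp hm
  have : (m:ℝ) ≤ (j:ℝ) := by exact_mod_cast h2
  have : 0 ≤ (j:ℝ) + 1/2 - (m:ℝ) := by linarith
  positivity

end FB4

namespace FB5
open FB FB2 Finset

noncomputable def g2 (t : ℕ) : ℝ := 1 / ((t:ℝ)+1)^2
noncomputable def g3 (t : ℕ) : ℝ := 1 / ((t:ℝ)+1)^3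

lemma summable_g2 : Summable g2 := by
  have h : Summable (fun n : ℕ => 1 / (n:ℝ)^2) :=
    Real.summable_one_div_nat_pow.mpr (by norm_num)
  have h2 := (summable_nat_add_iff 1).mpr h
  apply h2.congr
  intro t; simp [g2]

lemma summable_g3 : Summable g3 := by
  have h : Summable (fun n : ℕ => 1 / (n:ℝ)^3) :=
    Real.summable_one_div_nat_pow.mpr (by norm_num)
  have h2 := (summable_nat_add_iff 1).mpr h
  apply h2.congr
  intro t; simp [g3]

lemma S2_eq_range (j : ℕ) : S2 j = ∑ t ∈ Finset.range j, g2 t := by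
  induction j with
  | zero => simp [S2]
  | succ n ih => rw [S2_succ, Finset.sum_range_succ, ih, g2]

lemma S3_eq_range (j : ℕ) : S3 j = ∑ t ∈ Finset.range j, g3 t := by
  induction j with
  | zero => simp [S3]
  | succ n ih => rw [S3_succ, Finset.sum_range_succ, ih, g3]

lemma z2_tail (j : ℕ) : zeta2 - S2 j = ∑' t : ℕ, g2 (t + j) := by
  have h := summable_g2.sum_add_tsum_nat_add j
  rw [S2_eq_range]
  have hz : zeta2 = ∑' t : ℕ, g2 t := rfl
  rw [hz]; linarith

lemma z3_tail (j : ℕ) : zeta3 - S3 j = ∑' t : ℕ, g3 (t + j) := by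
  have h := summable_g3.sum_add_tsum_nat_add j
  rw [S3_eq_range]
  have hz : zeta3 = ∑' t : ℕ, g3 t := rfl
  rw [hz]; linarith

lemma S2_le_zeta2 (j : ℕ) : S2 j ≤ zeta2 := by
  have h := z2_tail j
  have : 0 ≤ ∑' t : ℕ, g2 (t + j) := tsum_nonneg (fun t => by unfold g2; positivity)
  linarith

lemma S3_le_zeta3 (j : ℕ) : S3 j ≤ zeta3 := by
  have h := z3_tail j
  have : 0 ≤ ∑' t : ℕ, g3 (t + j) := tsum_nonneg (fun t => by unfold g3; positivity)
  linarith

lemma Z2 (j : ℕ) : zeta3 - S3 j ≤ (1/((j:ℝ)+1)) * (zeta2 - S2 j) := by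
  have hterm : ∀ t : ℕ, g3 (t+j) ≤ (1/((j:ℝ)+1)) * g2 (t+j) := by
    intro t
    unfold g2 g3
    have hx0 : (0:ℝ) < ((t+j : ℕ):ℝ) + 1 := by positivity
    have hj0 : (0:ℝ) < ((j:ℝ)+1) := by positivity
    have hjx : ((j:ℝ)+1) ≤ ((t+j : ℕ):ℝ) + 1 := by
      push_cast
      have h0t : (0:ℝ) ≤ (t:ℝ) := Nat.cast_nonneg t
      linarith
    have hrw : (1:ℝ) / (((t+j : ℕ):ℝ)+1)^3
        = (1/(((t+j : ℕ):ℝ)+1)) * (1/(((t+j : ℕ):ℝ)+1)^2) := by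
      field_simp
    rw [hrw]
    apply mul_le_mul _ le_rfl (by positivity) (by positivity)
    exact one_div_le_one_div_of_le hj0 hjx
  have key : (∑' t : ℕ, g3 (t+j)) ≤ ∑' t : ℕ, (1/((j:ℝ)+1)) * g2 (t+j) :=
    Summable.tsum_le_tsum hterm ((summable_nat_add_iff j).mpr summable_g3)
      (((summable_nat_add_iff j).mpr summable_g2).mul_left _)
  rw [tsum_mul_left] at key
  rw [z2_tail, z3_tail]
  exact key

lemma zeta2_eq : zeta2 = Real.pi^2/6 := by
  have h := hasSum_zeta_two
  have h0 : HasSum (fun n : ℕ => (1:ℝ)/(((n+1:ℕ)):ℝ)^2) (Real.pi^2/6) := by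
    rw [hasSum_nat_add_iff (f := fun n : ℕ => (1:ℝ)/(n:ℝ)^2) 1]
    simpa using h
  have h1 : HasSum g2 (Real.pi^2/6) := by
    have he : (fun n : ℕ => (1:ℝ)/(((n+1:ℕ)):ℝ)^2) = g2 := by
      funext t; unfold g2; push_cast; ring
    rwa [he] at h0
  exact h1.tsum_eq

lemma zeta2_le_two : zeta2 ≤ 2 := by
  rw [zeta2_eq]
  nlinarith [Real.pi_lt_d2, Real.pi_gt_three]

end FB5

namespace FB6
open FB FB2 FB3 FB4 FB5

/-- numerator and denominator of the edge slope -/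
noncomputable def numE (j k : ℕ) : ℝ :=
  (1 - pp j) * (1/((k:ℝ)+2)^3) + pp j * (1/((k:ℝ)+1)^3)
noncomputable def denE (j k : ℕ) : ℝ :=
  (1 - pp j) * (1/((k:ℝ)+2)^2) + pp j * (1/((k:ℝ)+1)^2)
noncomputable def muE (j k : ℕ) : ℝ := numE j k / denE j k

lemma denE_pos (j k : ℕ) : 0 < denE j k := by
  have h1 := pp_pos j
  have h2 := pp_le_one j
  have hk : (0:ℝ) ≤ (k:ℝ) := Nat.cast_nonneg k
  apply add_pos_of_nonneg_of_pos
  · apply mul_nonneg (by linarith) (by positivity)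
  · apply mul_pos h1 (by positivity)

lemma sub_one_div_nonneg (k : ℕ) : 0 ≤ 1/((k:ℝ)+1) - 1/((k:ℝ)+2) := by
  have hk : (0:ℝ) ≤ (k:ℝ) := Nat.cast_nonneg k
  have e1 : (0:ℝ) < (k:ℝ)+1 := by linarith
  have e2 : (0:ℝ) < (k:ℝ)+2 := by linarith
  have := one_div_le_one_div_of_le e1 (show (k:ℝ)+1 ≤ (k:ℝ)+2 by linarith)
  linarith

lemma muE_le (j k : ℕ) : muE j k ≤ 1/((k:ℝ)+1) := by
  rw [muE, div_le_iff₀ (denE_pos j k)]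
  have h1 := pp_pos j
  have h2 := pp_le_one j
  have hk : (0:ℝ) ≤ (k:ℝ) := Nat.cast_nonneg k
  have e1 : (0:ℝ) < (k:ℝ)+1 := by linarith
  have e2 : (0:ℝ) < (k:ℝ)+2 := by linarith
  have key : 1/((k:ℝ)+1) * denE j k - numE j k
      = (1 - pp j) * (1/((k:ℝ)+2)^2) * (1/((k:ℝ)+1) - 1/((k:ℝ)+2)) := by
    rw [numE, denE]; field_simp; ring
  have h3 := sub_one_div_nonneg k
  nlinarith [mul_nonneg (mul_nonneg (show (0:ℝ) ≤ 1 - pp j by linarith)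
    (show (0:ℝ) ≤ 1/((k:ℝ)+2)^2 by positivity)) h3]

lemma muE_ge (j k : ℕ) : 1/((k:ℝ)+2) ≤ muE j k := by
  rw [muE, le_div_iff₀ (denE_pos j k)]
  have h1 := pp_pos j
  have h2 := pp_le_one j
  have hk : (0:ℝ) ≤ (k:ℝ) := Nat.cast_nonneg k
  have e1 : (0:ℝ) < (k:ℝ)+1 := by linarith
  have e2 : (0:ℝ) < (k:ℝ)+2 := by linarith
  have key : numE j k - 1/((k:ℝ)+2) * denE j k
      = pp j * (1/((k:ℝ)+1)^2) * (1/((k:ℝ)+1) - 1/((k:ℝ)+2)) := by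
    rw [numE, denE]; field_simp; ring
  have h3 := sub_one_div_nonneg k
  nlinarith [mul_nonneg (mul_nonneg (le_of_lt h1)
    (show (0:ℝ) ≤ 1/((k:ℝ)+1)^2 by positivity)) h3]

lemma muE_rel (j k : ℕ) :
    (1 - pp j) * DD (muE j k) (k+2) + pp j * DD (muE j k) (k+1) = 0 := by
  have hden := (denE_pos j k).ne'
  have hDD2 : DD (muE j k) (k+2) = 1/((k:ℝ)+2)^3 - muE j k * (1/((k:ℝ)+2)^2) := by
    rw [DD]; push_cast; ring
  have hDD1 : DD (muE j k) (k+1) = 1/((k:ℝ)+1)^3 - muE j k * (1/((k:ℝ)+1)^2) := by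
    rw [DD]; push_cast; ring
  rw [hDD2, hDD1]
  have : (1 - pp j) * (1/((k:ℝ)+2)^3 - muE j k * (1/((k:ℝ)+2)^2))
      + pp j * (1/((k:ℝ)+1)^3 - muE j k * (1/((k:ℝ)+1)^2))
      = numE j k - muE j k * denE j k := by rw [numE, denE]; ring
  rw [this, muE, div_mul_cancel₀ _ hden, sub_self]

end FB6

namespace FB7
open FB FB2 FB3 FB4 FB5 FB6

noncomputable def gens : Set (Fin 3 → ℝ) :=
  Set.range wM ∪ (⋃ j : ℕ, Set.range (vU j)) ∪
     Set.range (fun k => uZero - wP k) ∪ Set.range (fun k => uOne - wP k)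

lemma KU_eq : KU = closure (convexHull ℝ gens) := rfl

lemma S2_nonneg (n : ℕ) : 0 ≤ S2 n :=
  Finset.sum_nonneg fun m _ => by positivity

lemma S3_nonneg (n : ℕ) : 0 ≤ S3 n :=
  Finset.sum_nonneg fun m _ => by positivity

/-- `-2 + γ ζ₃ ≤ Aq γ j` for `γ = j + 1/2`. -/
lemma uOne_le_A (j : ℕ) : ((j:ℝ)+1/2) * zeta3 - 2 ≤ Aq ((j:ℝ)+1/2) j := by
  have hz2 := Z2 j
  have hz2' := S2_le_zeta2 j
  have h2 := zeta2_le_two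
  have hγ : (0:ℝ) ≤ (j:ℝ)+1/2 := by positivity
  have hj1 : (0:ℝ) < (j:ℝ)+1 := by positivity
  have h3 : ((j:ℝ)+1/2) * (zeta3 - S3 j) ≤ ((j:ℝ)+1/2) * ((1/((j:ℝ)+1)) * (zeta2 - S2 j)) :=
    mul_le_mul_of_nonneg_left hz2 hγ
  have h4 : ((j:ℝ)+1/2) * ((1/((j:ℝ)+1)) * (zeta2 - S2 j)) ≤ zeta2 - S2 j := by
    have hfrac : ((j:ℝ)+1/2) * (1/((j:ℝ)+1)) ≤ 1 := by
      rw [mul_one_div, div_le_one hj1]; linarith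
    have hnn : 0 ≤ zeta2 - S2 j := by linarith
    calc ((j:ℝ)+1/2) * ((1/((j:ℝ)+1)) * (zeta2 - S2 j))
        = (((j:ℝ)+1/2) * (1/((j:ℝ)+1))) * (zeta2 - S2 j) := by ring
      _ ≤ 1 * (zeta2 - S2 j) := mul_le_mul_of_nonneg_right hfrac hnn
      _ = zeta2 - S2 j := one_mul _
  rw [Aq]
  nlinarith

/-- the nonnegative offset of the k-part of the facet value. -/
lemma W_nonneg {μ : ℝ} {k : ℕ} (hμ1 : μ ≤ 1/((k:ℝ)+1)) {p : ℝ} (hp0 : 0 ≤ p) (hp1 : p ≤ 1) :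
    0 ≤ Bq μ (k+1) - p * DD μ (k+1) := by
  have hD : 0 ≤ DD μ (k+1) := DD_sign1 hμ1 (le_refl _)
  have hmem : k+1 ∈ Finset.Icc 1 (k+1) := Finset.mem_Icc.mpr ⟨by omega, le_refl _⟩
  have hsingle : DD μ (k+1) ≤ Bq μ (k+1) := by
    rw [Bq_eq_sum]
    exact Finset.single_le_sum (fun m hm => DD_sign1 hμ1 (Finset.mem_Icc.mp hm).2) hmem
  nlinarith

lemma DD_half (j k : ℕ) : DD (muE j k) (k+1) ≤ 1/2 := by
  set x : ℝ := (k:ℝ) with hx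
  have hx0 : (0:ℝ) ≤ x := Nat.cast_nonneg k
  have e1 : (0:ℝ) < x+1 := by linarith
  have e2 : (0:ℝ) < x+2 := by linarith
  have hge := muE_ge j k
  have hcast : DD (muE j k) (k+1) = 1/(x+1)^3 - muE j k * (1/(x+1)^2) := by
    rw [DD]; push_cast; ring
  have h1 : DD (muE j k) (k+1) ≤ 1/(x+1)^3 - (1/(x+2)) * (1/(x+1)^2) := by
    rw [hcast]
    have : (1/(x+2)) * (1/(x+1)^2) ≤ muE j k * (1/(x+1)^2) :=
      mul_le_mul_of_nonneg_right hge (by positivity)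
    linarith
  have h2 : 1/(x+1)^3 - (1/(x+2)) * (1/(x+1)^2) = 1/((x+1)^3*(x+2)) := by
    field_simp; ring
  have h3 : 1/((x+1)^3*(x+2)) ≤ 1/2 := by
    apply one_div_le_one_div_of_le (by norm_num)
    have c1 : (1:ℝ) ≤ (x+1)^3 := by nlinarith
    nlinarith
  linarith

lemma fl_gens_le_edge (j k : ℕ) :
    ∀ x ∈ gens, fl (muE j k) ((j:ℝ)+1/2) x ≤ fl (muE j k) ((j:ℝ)+1/2) (vU j k) := by
  intro x hx
  set μ : ℝ := muE j k with hμdef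
  set γ : ℝ := (j:ℝ)+1/2 with hγdef
  have hμ1 : μ ≤ 1/((k:ℝ)+1) := muE_le j k
  have hμ2 : 1/((k:ℝ)+2) ≤ μ := muE_ge j k
  have hμ0 : 0 ≤ μ := le_trans (by positivity) hμ2
  have hp0 : (0:ℝ) ≤ pp j := le_of_lt (pp_pos j)
  have hp1 : pp j ≤ 1 := pp_le_one j
  have hc : fl μ γ (vU j k) = Aq γ j + Bq μ (k+1) - pp j * DD μ (k+1) := fl_vU μ γ j k
  have hW : 0 ≤ Bq μ (k+1) - pp j * DD μ (k+1) := W_nonneg hμ1 hp0 hp1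
  rcases hx with ((h | h) | h) | h
  · obtain ⟨j', rfl⟩ := h
    rw [fl_wM, hc]
    have := A_max j j'
    linarith
  · obtain ⟨j', h⟩ := Set.mem_iUnion.mp h
    obtain ⟨k', rfl⟩ := h
    rw [fl_vU, hc]
    by_cases hjj : j' = j
    · subst hjj
      have := P2 hμ1 hμ2 hp0 hp1 (muE_rel j' k) k'
      linarith
    · have h1 := P1 hμ1 hμ2 (le_of_lt (pp_pos j')) (pp_le_one j') k'
      have h2 := A_gap hjj
      have h3 := DD_half j k
      have h4 : pp j * DD μ (k+1) ≤ pp j / 2 := by nlinarith [DD_sign1 hμ1 (le_refl (k+1))]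
      linarith
  · obtain ⟨k', rfl⟩ := h
    rw [fl_uZ, hc]
    have h1 := S2_le_zeta2 k'
    have h2 := S3_nonneg k'
    have h3 := A_nonneg j
    nlinarith
  · obtain ⟨k', rfl⟩ := h
    rw [fl_uO, hc]
    have h1 := S2_le_zeta2 k'
    have h2 := S3_nonneg k'
    have h3 := A_nonneg j
    have h4 := uOne_le_A j
    rw [← hγdef] at h3 h4
    nlinarith [mul_nonneg hμ0 (sub_nonneg.mpr h1)]

lemma DD_one_nonpos (m : ℕ) : DD 1 m ≤ 0 := by
  rcases Nat.eq_zero_or_pos m with rfl | hm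
  · simp [DD]
  apply DD_nonpos hm
  have hm' : (1:ℝ) ≤ (m:ℝ) := by exact_mod_cast hm
  rw [div_le_one (by linarith)]
  exact hm'

lemma fl_gens_le_first (j : ℕ) :
    ∀ x ∈ gens, fl 1 ((j:ℝ)+1/2) x ≤ fl 1 ((j:ℝ)+1/2) (wM j) := by
  intro x hx
  set γ : ℝ := (j:ℝ)+1/2 with hγdef
  rw [fl_wM]
  rcases hx with ((h | h) | h) | h
  · obtain ⟨j', rfl⟩ := h
    rw [fl_wM]
    exact A_max j j'
  · obtain ⟨j', h⟩ := Set.mem_iUnion.mp h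
    obtain ⟨k', rfl⟩ := h
    rw [fl_vU]
    have h1 : Bq 1 (k'+1) ≤ pp j' * DD 1 (k'+1) := by
      have hB : Bq 1 (k'+1) - Bq 1 k' = DD 1 (k'+1) := by
        rw [Bq_sub 1 (Nat.le_succ k')]; simp
      have hBk : Bq 1 k' ≤ 0 := by
        rw [Bq_eq_sum]
        exact Finset.sum_nonpos fun m _ => DD_one_nonpos m
      have hD := DD_one_nonpos (k'+1)
      have := pp_le_one j'
      have := pp_pos j'
      nlinarith
    have h2 := A_max j j'
    linarith
  · obtain ⟨k', rfl⟩ := h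
    rw [fl_uZ]
    have h1 := S2_le_zeta2 k'
    have h2 := S3_nonneg k'
    have h3 := A_nonneg j
    nlinarith
  · obtain ⟨k', rfl⟩ := h
    rw [fl_uO]
    have h1 := S2_le_zeta2 k'
    have h2 := S3_nonneg k'
    have h4 := uOne_le_A j
    rw [← hγdef] at h4
    linarith

end FB7

namespace FB8
open FB FB2 FB3 FB4 FB5 FB6 FB7

lemma fl_linear (μ γ : ℝ) : IsLinearMap ℝ (fl μ γ) := by
  constructor
  · intro x y; simp only [fl, Pi.add_apply]; ring
  · intro c x; simp only [fl, Pi.smul_apply, smul_eq_mul]; ring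

lemma fl_cont (μ γ : ℝ) : Continuous (fl μ γ) := by
  unfold fl
  fun_prop

lemma KU_le {μ γ c : ℝ} (h : ∀ x ∈ gens, fl μ γ x ≤ c) :
    ∀ x ∈ KU, fl μ γ x ≤ c := by
  intro x hx
  have hsub : KU ⊆ {y | fl μ γ y ≤ c} := by
    rw [KU_eq]
    apply closure_minimal
    · exact convexHull_min h (convex_halfSpace_le (fl_linear μ γ) c)
    · exact isClosed_le (fl_cont μ γ) continuous_const
  exact hsub hx

lemma fl_seg {μ γ c : ℝ} {x y q : Fin 3 → ℝ} (hx : fl μ γ x = c) (hy : fl μ γ y = c)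
    (hq : q ∈ segment ℝ x y) : fl μ γ q = c := by
  obtain ⟨a, b, ha, hb, hab, rfl⟩ := hq
  have h1 : fl μ γ (a • x + b • y) = a * fl μ γ x + b * fl μ γ y := by
    simp only [fl, Pi.add_apply, Pi.smul_apply, smul_eq_mul]; ring
  rw [h1, hx, hy]
  calc a * c + b * c = (a + b) * c := by ring
    _ = c := by rw [hab, one_mul]

lemma fl_shift (μ γ s : ℝ) (q : Fin 3 → ℝ) : fl μ γ (q + ![0,s,0]) = fl μ γ q + s := by
  have h0 : (q + ![0,s,0]) 0 = q 0 + 0 := rfl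
  have h1 : (q + ![0,s,0]) 1 = q 1 + s := rfl
  have h2 : (q + ![0,s,0]) 2 = q 2 + 0 := rfl
  rw [fl, fl, h0, h1, h2]; ring

lemma wM_mem (j : ℕ) : wM j ∈ gens :=
  Set.mem_union_left _ (Set.mem_union_left _ (Set.mem_union_left _ ⟨j, rfl⟩))

lemma vU_mem (j k : ℕ) : vU j k ∈ gens :=
  Set.mem_union_left _ (Set.mem_union_left _
    (Set.mem_union_right _ (Set.mem_iUnion.mpr ⟨j, ⟨k, rfl⟩⟩)))

lemma seg_mem_KU {x y : Fin 3 → ℝ} (hx : x ∈ gens) (hy : y ∈ gens) {q : Fin 3 → ℝ}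
    (hq : q ∈ segment ℝ x y) : q ∈ KU := by
  rw [KU_eq]
  exact subset_closure ((segment_subset_convexHull hx hy) hq)

end FB8


/-- **Lemma (front boundary).** For every `j`, the polygonal path
`η̂_j = [w₋(j), v(j,0)] ∪ ⋃ₖ [v(j,k), v(j,k+1)]` lies entirely on the front
boundary of `K`: every point `q` of the path lies in `K`, and no point strictly
in front of it (in the positive `y`-direction) lies in `K`. -/
theorem path_on_front_boundary (j : ℕ) (q : Fin 3 → ℝ)
    (hq : q ∈ segment ℝ (wM j) (vU j 0) ∪ ⋃ k : ℕ, segment ℝ (vU j k) (vU j (k + 1))) :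
    q ∈ KU ∧ ∀ s : ℝ, 0 < s → q + ![0, s, 0] ∉ KU := by
  open FB FB2 FB3 FB4 FB5 FB6 FB7 FB8 in
  rcases hq with hseg | hseg
  · refine ⟨seg_mem_KU (wM_mem j) (vU_mem j 0) hseg, ?_⟩
    intro s hs hmemK
    set γ : ℝ := (j:ℝ)+1/2 with hγdef
    have hend1 : fl 1 γ (wM j) = Aq γ j := fl_wM 1 γ j
    have hend2 : fl 1 γ (vU j 0) = Aq γ j := by
      rw [fl_vU]
      have hB : Bq 1 (0+1) = DD 1 1 := by
        rw [Bq_eq_sum, Finset.Icc_self, Finset.sum_singleton]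
      have hD : DD 1 1 = 0 := by rw [DD]; norm_num
      rw [hB, hD]; ring
    have hq' : fl 1 γ q = Aq γ j := fl_seg hend1 hend2 hseg
    have hbound := KU_le (fl_gens_le_first j) _ hmemK
    rw [fl_wM, fl_shift, hq'] at hbound
    linarith
  · obtain ⟨k, hseg⟩ := Set.mem_iUnion.mp hseg
    refine ⟨seg_mem_KU (vU_mem j k) (vU_mem j (k+1)) hseg, ?_⟩
    intro s hs hmemK
    set γ : ℝ := (j:ℝ)+1/2 with hγdef
    set μ : ℝ := muE j k with hμdef
    set c : ℝ := fl μ γ (vU j k) with hcdef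
    have hend2 : fl μ γ (vU j (k+1)) = c := by
      rw [hcdef, fl_vU, fl_vU]
      have hBs : Bq μ (k+2) - Bq μ (k+1) = DD μ (k+2) := by
        rw [Bq_sub μ (by omega : k+1 ≤ k+2)]
        rw [Nat.Ioc_succ_singleton, Finset.sum_singleton]
      have hrel := muE_rel j k
      rw [← hμdef] at hrel
      linear_combination hBs + hrel
    have hq' : fl μ γ q = c := fl_seg rfl hend2 hseg
    have hbound := KU_le (fl_gens_le_edge j k) _ hmemK
    rw [← hμdef, ← hγdef, ← hcdef, fl_shift, hq'] at hbound
    linarith
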